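/- Let R be an algebra of type (𝒢, m, n), let i ∈ [n−1], and let S be a subgee. (1) If i ∈ S, then Vᵢ W_S − (−1)^{ρᵢ(S∖{i})} W_{S∖{i}} lies in the ℚ-span of {V_U : U a subgee}, where ρᵢ(T) = #{t ∈ T : t > i}. (2) If i ∉ S, then Vᵢ W_S lies in the ℚ-span of {V_U : U a subgee}. Moreover, if m − |S| ≥ s, then these memberships are exact equalities: in case (1), Vᵢ W_S = (−1)^{ρᵢ(S∖{i})} W_{S∖{i}}, and in case (2), Vᵢ W_S = 0. -/

import Mathlib

open scoped TensorProduct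

/-- `[k] = {1,…,k}` as a finset of positive integers. -/
def bra (k : ℕ) : Finset ℕ+ := (Finset.range k).image (fun i => ⟨i + 1, i.succ_pos⟩)

/-- The domination order on finite multisets of positive integers: `MLE S T` holds iff there
is a submultiset `T'` of `T` that can be matched up with `S` so that each element of `S` is
at most its partner in `T'`. -/
def MLE (S T : Multiset ℕ+) : Prop := ∃ T' ≤ T, Multiset.Rel (· ≤ ·) S T'

/-- `S` is a subgee of the collection `𝒢` of gees. -/
def Subgee (𝒢 : Finset (Finset ℕ+)) (S : Finset ℕ+) : Prop := ∃ G ∈ 𝒢, MLE S.val G.val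

/-- `rho i T` is the number of elements of `T` greater than `i`. -/
def rho (i : ℕ+) (T : Finset ℕ+) : ℕ := (T.filter (fun t => i < t)).card

/-- The ordered monomial `V_S = V_{s₁} ⋯ V_{s_k}` for `S = {s₁ < ⋯ < s_k}`. -/
def VSmon {R : Type} [Ring R] (V : ℕ+ → R) (S : Finset ℕ+) : R :=
  ((S.sort (· ≤ ·)).map V).prod

/-- An algebra of type `(𝒢, m, n)`. -/
structure IsPolygonAlgebra (n m : ℕ) (𝒢 : Finset (Finset ℕ+))
    (R : Type) [Ring R] [Algebra ℚ R] [FiniteDimensional ℚ R]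
    (𝒜 : ℕ → Submodule ℚ R) [GradedAlgebra 𝒜]
    (V : ℕ+ → R) (W : Finset ℕ+ → R) : Prop where
  hn : 4 ≤ n
  hm : 1 ≤ m
  gee_nonempty : 𝒢.Nonempty
  gee_sub : ∀ G ∈ 𝒢, G ⊆ bra (n - 1)
  gee_incomp : ∀ G ∈ 𝒢, ∀ G' ∈ 𝒢, MLE G.val G'.val → G = G'
  gee_card : ∀ G ∈ 𝒢, G.card ≤ m - 1
  gcomm : ∀ (i j : ℕ) (x y : R), x ∈ 𝒜 i → y ∈ 𝒜 j →
    x * y = ((-1 : ℚ)) ^ (i * j) • (y * x)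
  V_mem : ∀ i : ℕ+, (i : ℕ) ≤ n - 1 → V i ∈ 𝒜 1
  W_mem : ∀ S : Finset ℕ+, Subgee 𝒢 S → W S ∈ 𝒜 (m - S.card)
  VS_ne : ∀ S : Finset ℕ+, S ⊆ bra (n - 1) → (VSmon V S ≠ 0 ↔ Subgee 𝒢 S)
  basis_indep : LinearIndependent ℚ
    (Sum.elim (fun S : {S : Finset ℕ+ // Subgee 𝒢 S} => VSmon V S.1)
      (fun S : {S : Finset ℕ+ // Subgee 𝒢 S} => W S.1))
  basis_span : Submodule.span ℚ (Set.range
    (Sum.elim (fun S : {S : Finset ℕ+ // Subgee 𝒢 S} => VSmon V S.1)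
      (fun S : {S : Finset ℕ+ // Subgee 𝒢 S} => W S.1))) = ⊤
  VW : ∀ S S' : Finset ℕ+, Subgee 𝒢 S → Subgee 𝒢 S' → S.card = S'.card →
    VSmon V S * W S' = if S = S' then W ∅ else 0
  WW : ∀ S S' : Finset ℕ+, Subgee 𝒢 S → Subgee 𝒢 S' → S.card + S'.card = m →
    W S * W S' = 0

/-- `R` has no exotic products. -/
def NoExoticProducts (n : ℕ) (𝒢 : Finset (Finset ℕ+))
    {R : Type} [Ring R] [Algebra ℚ R] (V : ℕ+ → R) (W : Finset ℕ+ → R) : Prop :=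
  (∀ S S' : Finset ℕ+, Subgee 𝒢 S → Subgee 𝒢 S' → W S * W S' = 0) ∧
  (∀ i : ℕ+, (i : ℕ) ≤ n - 1 → ∀ S : Finset ℕ+, Subgee 𝒢 S →
    (i ∈ S → V i * W S = ((-1 : ℚ)) ^ (rho i (S.erase i)) • W (S.erase i)) ∧
    (i ∉ S → V i * W S = 0))

section Tensor

variable {R : Type} [Ring R] [Algebra ℚ R] (𝒜 : ℕ → Submodule ℚ R) [GradedAlgebra 𝒜]

/-- The multiplication map `μ : R ⊗̂ R → R`. -/
noncomputable def muMap : (𝒜 ᵍ⊗[ℚ] 𝒜) →ₗ[ℚ] R :=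
  (LinearMap.mul' ℚ R).comp (GradedTensorProduct.of ℚ 𝒜 𝒜).symm.toLinearMap

/-- `x ⊗ y` as an element of the graded tensor product `R ⊗̂ R`. -/
noncomputable def tm (x y : R) : 𝒜 ᵍ⊗[ℚ] 𝒜 := GradedTensorProduct.of ℚ 𝒜 𝒜 (x ⊗ₜ y)

/-- `ū = u ⊗ 1 - 1 ⊗ u`. -/
noncomputable def ubar (u : R) : 𝒜 ᵍ⊗[ℚ] 𝒜 := tm 𝒜 u 1 - tm 𝒜 1 u

/-- `V̄_D = ∏_{i ∈ D} V̄ᵢ` with factors in increasing order of `i`. -/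
noncomputable def Vbar (V : ℕ+ → R) (D : Finset ℕ+) : 𝒜 ᵍ⊗[ℚ] 𝒜 :=
  ((D.sort (· ≤ ·)).map (fun i => ubar 𝒜 (V i))).prod

/-- The set of `k` such that some product of `k` zero divisors in `R ⊗̂ R` is nonzero;
`zcl R` is the greatest element of this set. -/
def zclSet : Set ℕ :=
  {k : ℕ | ∃ L : List (𝒜 ᵍ⊗[ℚ] 𝒜), L.length = k ∧
    (∀ x ∈ L, muMap 𝒜 x = 0) ∧ L.prod ≠ 0}

end Tensor

namespace PA

lemma mem_bra {k : ℕ} {g : ℕ+} : g ∈ bra k ↔ (g : ℕ) ≤ k := by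
  unfold bra; refine Finset.mem_image.trans ?_; simp only [Finset.mem_range]
  constructor
  · rintro ⟨i, hi, rfl⟩; simpa using hi
  · intro hg
    have hgpos := g.pos
    refine ⟨(g : ℕ) - 1, by omega, ?_⟩
    apply PNat.coe_injective
    simp; omega

lemma rel_mono {S' S T : Multiset ℕ+} (h : Multiset.Rel (· ≤ ·) S T) (hsub : S' ≤ S) :
    ∃ T' ≤ T, Multiset.Rel (· ≤ ·) S' T' := by
  induction h generalizing S' with
  | zero =>
    refine ⟨0, le_refl _, ?_⟩
    rw [Multiset.le_zero.mp hsub]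
    exact Multiset.Rel.zero
  | @cons a b s t hab hst ih =>
    by_cases ha : a ∈ S'
    · obtain ⟨T', hT', hrel⟩ := ih (Multiset.erase_le_iff_le_cons.mpr hsub)
      refine ⟨b ::ₘ T', Multiset.cons_le_cons b hT', ?_⟩
      rw [← Multiset.cons_erase ha]
      exact Multiset.Rel.cons hab hrel
    · have : S' ≤ s := by
        have := Multiset.erase_le_iff_le_cons.mpr hsub
        rwa [Multiset.erase_of_notMem ha] at this
      obtain ⟨T', hT', hrel⟩ := ih this
      exact ⟨T', le_trans hT' (Multiset.le_cons_self t b), hrel⟩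

lemma rel_mem {S T : Multiset ℕ+} (h : Multiset.Rel (· ≤ ·) S T) {a : ℕ+} (ha : a ∈ S) :
    ∃ b ∈ T, a ≤ b := by
  induction h with
  | zero => simp at ha
  | @cons c d s t hcd hst ih =>
    rcases Multiset.mem_cons.mp ha with rfl | ha'
    · exact ⟨d, Multiset.mem_cons_self d t, hcd⟩
    · obtain ⟨b, hb, hab⟩ := ih ha'
      exact ⟨b, Multiset.mem_cons_of_mem hb, hab⟩

variable {𝒢 : Finset (Finset ℕ+)}

lemma subgee_empty (h𝒢 : 𝒢.Nonempty) : Subgee 𝒢 ∅ := by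
  obtain ⟨G, hG⟩ := h𝒢
  exact ⟨G, hG, 0, Multiset.zero_le _, by simp [Finset.empty_val]⟩

lemma subgee_subset {S' S : Finset ℕ+} (hsub : S' ⊆ S) (hS : Subgee 𝒢 S) : Subgee 𝒢 S' := by
  obtain ⟨G, hG, T', hT', hrel⟩ := hS
  obtain ⟨T'', hT'', hrel'⟩ := rel_mono hrel (Finset.val_le_iff.mpr hsub)
  exact ⟨G, hG, T'', le_trans hT'' hT', hrel'⟩

lemma subgee_card {m : ℕ} (hcard : ∀ G ∈ 𝒢, G.card ≤ m - 1) {S : Finset ℕ+}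
    (hS : Subgee 𝒢 S) : S.card ≤ m - 1 := by
  obtain ⟨G, hG, T', hT', hrel⟩ := hS
  have h1 : S.card = Multiset.card T' := by
    simpa using Multiset.card_eq_card_of_rel hrel
  have h2 : Multiset.card T' ≤ G.card := by
    simpa using Multiset.card_le_card hT'
  exact le_trans (h1 ▸ h2) (hcard G hG)

lemma subgee_mem {n : ℕ} (hsub : ∀ G ∈ 𝒢, G ⊆ bra (n - 1)) {S : Finset ℕ+}
    (hS : Subgee 𝒢 S) {j : ℕ+} (hj : j ∈ S) : (j : ℕ) ≤ n - 1 := by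
  obtain ⟨G, hG, T', hT', hrel⟩ := hS
  obtain ⟨b, hb, hjb⟩ := rel_mem hrel (by simpa using hj)
  have hbG : b ∈ G := Multiset.mem_of_le hT' hb
  have := mem_bra.mp (hsub G hG hbG)
  calc (j : ℕ) ≤ (b : ℕ) := hjb
    _ ≤ n - 1 := this

lemma subgee_sub_bra {n : ℕ} (hsub : ∀ G ∈ 𝒢, G ⊆ bra (n - 1)) {S : Finset ℕ+}
    (hS : Subgee 𝒢 S) : S ⊆ bra (n - 1) := fun j hj => mem_bra.mpr (subgee_mem hsub hS hj)

end PA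

namespace PA
open List

lemma drop_ge (i : ℕ+) : ∀ l : List ℕ+, l.Pairwise (· ≤ ·) →
    ∀ j ∈ l.dropWhile (fun j => decide (j < i)), i ≤ j
  | [] => by simp
  | a :: t => fun hs j hj => by
    by_cases hpa : a < i
    · rw [List.dropWhile_cons_of_pos (by simpa using hpa)] at hj
      exact drop_ge i t (List.pairwise_cons.mp hs).2 j hj
    · rw [List.dropWhile_cons_of_neg (by simpa using hpa)] at hj
      rcases List.mem_cons.mp hj with rfl | hjt
      · exact not_lt.mp hpa
      · exact le_trans (not_lt.mp hpa) ((List.pairwise_cons.mp hs).1 j hjt)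

lemma drop_gt {i : ℕ+} {T : Finset ℕ+} (hi : i ∉ T) :
    ∀ j ∈ (T.sort (· ≤ ·)).dropWhile (fun j => decide (j < i)), i < j := by
  intro j hj
  have hle : i ≤ j := drop_ge i _ (Finset.pairwise_sort _ _) j hj
  have hjT : j ∈ T := by
    have := (List.dropWhile_sublist _).subset hj
    rwa [Finset.mem_sort] at this
  exact lt_of_le_of_ne hle (fun he => hi (he ▸ hjT))

lemma take_lt {i : ℕ+} {T : Finset ℕ+} :
    ∀ j ∈ (T.sort (· ≤ ·)).takeWhile (fun j => decide (j < i)), j < i := fun _ hj =>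
  of_decide_eq_true (List.mem_takeWhile_imp (p := fun j => decide (j < i)) hj)

lemma sort_insert_split {i : ℕ+} {T : Finset ℕ+} (hi : i ∉ T) :
    (insert i T).sort (· ≤ ·) =
      (T.sort (· ≤ ·)).takeWhile (fun j => decide (j < i)) ++
        i :: (T.sort (· ≤ ·)).dropWhile (fun j => decide (j < i)) := by
  set l := T.sort (· ≤ ·) with hl
  set l₁ := l.takeWhile (fun j => decide (j < i)) with hl₁
  set l₂ := l.dropWhile (fun j => decide (j < i)) with hl₂
  have h1 : ∀ j ∈ l₁, j < i := take_lt
  have h2 : ∀ j ∈ l₂, i < j := drop_gt hi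
  have hsplit : l₁ ++ l₂ = l := List.takeWhile_append_dropWhile
  apply List.Perm.eq_of_pairwise' (r := (· ≤ ·)) (Finset.pairwise_sort _ _) ?_ ?_
  · refine List.pairwise_append.mpr
      ⟨(Finset.pairwise_sort _ _).sublist (List.takeWhile_sublist _), ?_, ?_⟩
    · exact List.pairwise_cons.mpr ⟨fun b hb => le_of_lt (h2 b hb),
        (Finset.pairwise_sort _ _).sublist (List.dropWhile_sublist _)⟩
    · intro a ha b hb
      rcases List.mem_cons.mp hb with rfl | hb'
      · exact le_of_lt (h1 a ha)
      · exact le_of_lt (lt_trans (h1 a ha) (h2 b hb'))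
  · have hp1 : (insert i T).sort (· ≤ ·) ~ i :: (l₁ ++ l₂) := by
      rw [hsplit]
      refine Multiset.coe_eq_coe.mp ?_
      rw [Finset.sort_eq, ← Multiset.cons_coe, hl, Finset.sort_eq,
        Finset.insert_val_of_notMem hi]
    exact hp1.trans List.perm_middle.symm

lemma dropWhile_length_rho {i : ℕ+} {T : Finset ℕ+} (hi : i ∉ T) :
    ((T.sort (· ≤ ·)).dropWhile (fun j => decide (j < i))).length = rho i T := by
  set l := T.sort (· ≤ ·) with hl
  set l₁ := l.takeWhile (fun j => decide (j < i)) with hl₁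
  set l₂ := l.dropWhile (fun j => decide (j < i)) with hl₂
  have h1 : ∀ j ∈ l₁, j < i := take_lt
  have h2 : ∀ j ∈ l₂, i < j := drop_gt hi
  have hsplit : l₁ ++ l₂ = l := List.takeWhile_append_dropWhile
  have hr : rho i T = l.countP (fun t => decide (i < t)) := by
    rw [rho, Finset.card, Finset.filter_val, ← Multiset.countP_eq_card_filter,
      hl, ← Finset.sort_eq T (· ≤ ·), Multiset.coe_countP]
  rw [hr, ← hsplit, List.countP_append,
    List.countP_eq_zero.mpr (by intro a ha; simpa using not_lt.mpr (le_of_lt (h1 a ha))),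
    List.countP_eq_length.mpr (by intro a ha; simpa using h2 a ha), zero_add]

end PA

namespace PA

variable {n m : ℕ} {𝒢 : Finset (Finset ℕ+)} {R : Type} [Ring R] [Algebra ℚ R]
  [FiniteDimensional ℚ R] {𝒜 : ℕ → Submodule ℚ R} [GradedAlgebra 𝒜]
  {V : ℕ+ → R} {W : Finset ℕ+ → R}

lemma Vsq (h : IsPolygonAlgebra n m 𝒢 R 𝒜 V W) {i : ℕ+} (hi : (i : ℕ) ≤ n - 1) :
    V i * V i = 0 := by
  have hc := h.gcomm 1 1 (V i) (V i) (h.V_mem i hi) (h.V_mem i hi)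
  have hne : V i * V i = -(V i * V i) := by simpa using hc
  have h2 : (2 : ℚ) • (V i * V i) = 0 := by
    rw [two_smul]
    nth_rewrite 1 [hne]
    exact neg_add_cancel _
  simpa using (smul_eq_zero.mp h2).resolve_left (by norm_num)

lemma listProd_mem (h : IsPolygonAlgebra n m 𝒢 R 𝒜 V W) :
    ∀ l : List ℕ+, (∀ j ∈ l, (j : ℕ) ≤ n - 1) → (l.map V).prod ∈ 𝒜 l.length
  | [], _ => by simpa using SetLike.one_mem_graded 𝒜
  | a :: l, hl => by
    simp only [List.map_cons, List.prod_cons, List.length_cons]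
    have := SetLike.mul_mem_graded (h.V_mem a (hl a (by simp)))
      (listProd_mem h l (fun j hj => hl j (by simp [hj])))
    convert this using 2
    omega

lemma prod_comm_V (h : IsPolygonAlgebra n m 𝒢 R 𝒜 V W) {l : List ℕ+}
    (hl : ∀ j ∈ l, (j : ℕ) ≤ n - 1) {i : ℕ+} (hi : (i : ℕ) ≤ n - 1) :
    (l.map V).prod * V i = ((-1 : ℚ)) ^ l.length • (V i * (l.map V).prod) := by
  have := h.gcomm l.length 1 _ _ (listProd_mem h l hl) (h.V_mem i hi)
  simpa using this

lemma VSmon_mem (h : IsPolygonAlgebra n m 𝒢 R 𝒜 V W) {T : Finset ℕ+}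
    (hT : ∀ j ∈ T, (j : ℕ) ≤ n - 1) : VSmon V T ∈ 𝒜 T.card := by
  have := listProd_mem h (T.sort (· ≤ ·)) (fun j hj => hT j (by simpa using hj))
  rwa [Finset.length_sort] at this

lemma VSmon_mul_V_of_not_mem (h : IsPolygonAlgebra n m 𝒢 R 𝒜 V W) {T : Finset ℕ+}
    (hT : ∀ j ∈ T, (j : ℕ) ≤ n - 1) {i : ℕ+} (hi : (i : ℕ) ≤ n - 1) (hiT : i ∉ T) :
    VSmon V T * V i = ((-1 : ℚ)) ^ (rho i T) • VSmon V (insert i T) := by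
  set l₁ := (T.sort (· ≤ ·)).takeWhile (fun j => decide (j < i)) with hl1
  set l₂ := (T.sort (· ≤ ·)).dropWhile (fun j => decide (j < i)) with hl2
  have hsplit : l₁ ++ l₂ = T.sort (· ≤ ·) := List.takeWhile_append_dropWhile
  have hmem : ∀ j ∈ l₂, (j : ℕ) ≤ n - 1 := fun j hj => hT j (by
    rw [← Finset.mem_sort (α := ℕ+) (· ≤ ·), ← hsplit]
    exact List.mem_append_right _ hj)
  have hins := sort_insert_split hiT
  have hlen := dropWhile_length_rho hiT
  simp only [VSmon]
  conv_rhs => rw [hins]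
  conv_lhs => rw [← hsplit]
  simp only [List.map_append, List.prod_append, List.map_cons, List.prod_cons]
  rw [mul_assoc, prod_comm_V h hmem hi, hlen, mul_smul_comm]

lemma VSmon_mul_V_of_mem (h : IsPolygonAlgebra n m 𝒢 R 𝒜 V W) {T : Finset ℕ+}
    (hT : ∀ j ∈ T, (j : ℕ) ≤ n - 1) {i : ℕ+} (hi : (i : ℕ) ≤ n - 1) (hiT : i ∈ T) :
    VSmon V T * V i = 0 := by
  obtain ⟨s, t, hst⟩ := List.append_of_mem ((Finset.mem_sort (· ≤ ·)).mpr hiT)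
  have hmem : ∀ j ∈ T.sort (· ≤ ·), (j : ℕ) ≤ n - 1 := fun j hj =>
    hT j ((Finset.mem_sort (· ≤ ·)).mp hj)
  have hs : ∀ j ∈ t, (j : ℕ) ≤ n - 1 := fun j hj => hmem j (by simp [hst, hj])
  simp only [VSmon, hst, List.map_append, List.prod_append, List.map_cons, List.prod_cons]
  have key : (V i * (t.map V).prod) * V i = 0 := by
    rw [mul_assoc, prod_comm_V h hs hi, mul_smul_comm, ← mul_assoc, Vsq h hi, zero_mul,
      smul_zero]
  rw [mul_assoc, key, mul_zero]

lemma VSmon_mem_spanV (h : IsPolygonAlgebra n m 𝒢 R 𝒜 V W) {T : Finset ℕ+}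
    (hT : ∀ j ∈ T, (j : ℕ) ≤ n - 1) :
    VSmon V T ∈ Submodule.span ℚ {x : R | ∃ U : Finset ℕ+, Subgee 𝒢 U ∧ x = VSmon V U} := by
  by_cases hs : Subgee 𝒢 T
  · exact Submodule.subset_span ⟨T, hs, rfl⟩
  · have hz : VSmon V T = 0 := by
      by_contra hne
      exact hs ((h.VS_ne T (fun j hj => mem_bra.mpr (hT j hj))).mp hne)
    rw [hz]
    exact Submodule.zero_mem _

lemma spanV_mul_V (h : IsPolygonAlgebra n m 𝒢 R 𝒜 V W) {y : R}
    (hy : y ∈ Submodule.span ℚ {x : R | ∃ U : Finset ℕ+, Subgee 𝒢 U ∧ x = VSmon V U})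
    {i : ℕ+} (hi : (i : ℕ) ≤ n - 1) :
    y * V i ∈ Submodule.span ℚ {x : R | ∃ U : Finset ℕ+, Subgee 𝒢 U ∧ x = VSmon V U} := by
  induction hy using Submodule.span_induction with
  | mem x hx =>
    obtain ⟨U, hU, rfl⟩ := hx
    have hUel : ∀ j ∈ U, (j : ℕ) ≤ n - 1 := fun j hj => subgee_mem h.gee_sub hU hj
    by_cases hiU : i ∈ U
    · rw [VSmon_mul_V_of_mem h hUel hi hiU]
      exact Submodule.zero_mem _
    · rw [VSmon_mul_V_of_not_mem h hUel hi hiU]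
      refine Submodule.smul_mem _ _ (VSmon_mem_spanV h ?_)
      intro j hj
      rcases Finset.mem_insert.mp hj with rfl | hj'
      · exact hi
      · exact hUel j hj'
  | zero => rw [zero_mul]; exact Submodule.zero_mem _
  | add a b _ _ ha hb => rw [add_mul]; exact Submodule.add_mem _ ha hb
  | smul a x _ hx => rw [smul_mul_assoc]; exact Submodule.smul_mem _ _ hx

lemma spanV_mul_list (h : IsPolygonAlgebra n m 𝒢 R 𝒜 V W) :
    ∀ l : List ℕ+, (∀ j ∈ l, (j : ℕ) ≤ n - 1) → ∀ y : R,
    y ∈ Submodule.span ℚ {x : R | ∃ U : Finset ℕ+, Subgee 𝒢 U ∧ x = VSmon V U} →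
    y * (l.map V).prod ∈ Submodule.span ℚ {x : R | ∃ U : Finset ℕ+, Subgee 𝒢 U ∧ x = VSmon V U}
  | [], _, y, hy => by simpa using hy
  | a :: l, hl, y, hy => by
    simp only [List.map_cons, List.prod_cons, ← mul_assoc]
    exact spanV_mul_list h l (fun j hj => hl j (by simp [hj])) _
      (spanV_mul_V h hy (hl a (by simp)))

lemma spanV_mul_VSmon (h : IsPolygonAlgebra n m 𝒢 R 𝒜 V W) {y : R}
    (hy : y ∈ Submodule.span ℚ {x : R | ∃ U : Finset ℕ+, Subgee 𝒢 U ∧ x = VSmon V U})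
    {U : Finset ℕ+} (hU : ∀ j ∈ U, (j : ℕ) ≤ n - 1) :
    y * VSmon V U ∈ Submodule.span ℚ {x : R | ∃ U : Finset ℕ+, Subgee 𝒢 U ∧ x = VSmon V U} :=
  spanV_mul_list h _ (fun j hj => hU j ((Finset.mem_sort (· ≤ ·)).mp hj)) y hy

end PA

namespace PA

variable {n m : ℕ} {𝒢 : Finset (Finset ℕ+)} {R : Type} [Ring R] [Algebra ℚ R]
  [FiniteDimensional ℚ R] {𝒜 : ℕ → Submodule ℚ R} [GradedAlgebra 𝒜]
  {V : ℕ+ → R} {W : Finset ℕ+ → R}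

/-- The degree of a basis index. -/
def pdeg (m : ℕ) (𝒢 : Finset (Finset ℕ+))
    (j : {S : Finset ℕ+ // Subgee 𝒢 S} ⊕ {S : Finset ℕ+ // Subgee 𝒢 S}) : ℕ :=
  Sum.elim (fun U => U.1.card) (fun T => m - T.1.card) j

noncomputable def pabasis (h : IsPolygonAlgebra n m 𝒢 R 𝒜 V W) :
    Module.Basis ({S : Finset ℕ+ // Subgee 𝒢 S} ⊕ {S : Finset ℕ+ // Subgee 𝒢 S}) ℚ R :=
  Module.Basis.mk h.basis_indep h.basis_span.ge

lemma pabasis_inl (h : IsPolygonAlgebra n m 𝒢 R 𝒜 V W) (U : {S : Finset ℕ+ // Subgee 𝒢 S}) :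
    pabasis h (Sum.inl U) = VSmon V U.1 := by
  rw [pabasis, Module.Basis.mk_apply, Sum.elim_inl]

lemma pabasis_inr (h : IsPolygonAlgebra n m 𝒢 R 𝒜 V W) (T : {S : Finset ℕ+ // Subgee 𝒢 S}) :
    pabasis h (Sum.inr T) = W T.1 := by
  rw [pabasis, Module.Basis.mk_apply, Sum.elim_inr]

lemma repr_W (h : IsPolygonAlgebra n m 𝒢 R 𝒜 V W) (T : {S : Finset ℕ+ // Subgee 𝒢 S}) :
    (pabasis h).repr (W T.1) = Finsupp.single (Sum.inr T) 1 := by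
  rw [← pabasis_inr h T, Module.Basis.repr_self]

lemma pabasis_deg (h : IsPolygonAlgebra n m 𝒢 R 𝒜 V W)
    (j : {S : Finset ℕ+ // Subgee 𝒢 S} ⊕ {S : Finset ℕ+ // Subgee 𝒢 S}) :
    pabasis h j ∈ 𝒜 (pdeg m 𝒢 j) := by
  rcases j with U | T
  · rw [pabasis_inl]
    exact VSmon_mem h (fun j hj => subgee_mem h.gee_sub U.2 hj)
  · rw [pabasis_inr]
    exact h.W_mem T.1 T.2

lemma repr_eq_zero_of_deg_ne (h : IsPolygonAlgebra n m 𝒢 R 𝒜 V W) {x : R} {d : ℕ}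
    (hx : x ∈ 𝒜 d)
    (j : {S : Finset ℕ+ // Subgee 𝒢 S} ⊕ {S : Finset ℕ+ // Subgee 𝒢 S})
    (hj : pdeg m 𝒢 j ≠ d) : (pabasis h).repr x j = 0 := by
  classical
  set b := pabasis h with hb
  set c := b.repr x with hc
  set e := pdeg m 𝒢 j with he
  set p : {S : Finset ℕ+ // Subgee 𝒢 S} ⊕ {S : Finset ℕ+ // Subgee 𝒢 S} → Prop :=
    fun j' => pdeg m 𝒢 j' = e with hp
  have hxsum : x = c.sum fun j' a => a • b j' := by
    conv_lhs => rw [← b.linearCombination_repr x]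
    rw [Finsupp.linearCombination_apply]
  have h3 : ∀ j', GradedAlgebra.proj 𝒜 e (b j') = if p j' then b j' else 0 := by
    intro j'
    rw [GradedAlgebra.proj_apply]
    by_cases hpj : p j'
    · rw [if_pos hpj]
      exact DirectSum.decompose_of_mem_same 𝒜 (hpj ▸ pabasis_deg h j')
    · rw [if_neg hpj]
      exact DirectSum.decompose_of_mem_ne 𝒜 (pabasis_deg h j') hpj
  have hproj : GradedAlgebra.proj 𝒜 e x = 0 := by
    rw [GradedAlgebra.proj_apply]
    exact DirectSum.decompose_of_mem_ne 𝒜 hx (fun hde => hj hde.symm)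
  have key : Finsupp.linearCombination ℚ ⇑b (c.filter p) = 0 := by
    rw [Finsupp.linearCombination_apply, Finsupp.sum, Finsupp.support_filter]
    have heq : ∀ j' ∈ c.support.filter p, (c.filter p) j' • b j' = c j' • b j' := by
      intro j' hj'
      rw [Finsupp.filter_apply_pos _ _ (Finset.mem_filter.mp hj').2]
    rw [Finset.sum_congr rfl heq, Finset.sum_filter (p := p)
      (f := fun j' => c j' • b j')]
    have : ∑ j' ∈ c.support, (if p j' then c j' • b j' else 0)
        = ∑ j' ∈ c.support, c j' • GradedAlgebra.proj 𝒜 e (b j') := by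
      refine Finset.sum_congr rfl (fun j' _ => ?_)
      rw [h3 j']
      by_cases hpj : p j'
      · rw [if_pos hpj, if_pos hpj]
      · rw [if_neg hpj, if_neg hpj, smul_zero]
    rw [this]
    have : ∑ j' ∈ c.support, c j' • GradedAlgebra.proj 𝒜 e (b j')
        = GradedAlgebra.proj 𝒜 e x := by
      conv_rhs => rw [hxsum, Finsupp.sum]
      rw [map_sum]
      exact Finset.sum_congr rfl (fun j' _ => (map_smul _ _ _).symm)
    rw [this, hproj]
  have hf := linearIndependent_iff.mp b.linearIndependent _ key
  have hcj : c j = (c.filter p) j := (Finsupp.filter_apply_pos p c he.symm).symm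
  rw [hcj, hf]
  rfl

lemma repr_inr_zero_of_mem_spanV (h : IsPolygonAlgebra n m 𝒢 R 𝒜 V W) {z : R}
    (hz : z ∈ Submodule.span ℚ {x : R | ∃ U : Finset ℕ+, Subgee 𝒢 U ∧ x = VSmon V U})
    (T : {S : Finset ℕ+ // Subgee 𝒢 S}) : (pabasis h).repr z (Sum.inr T) = 0 := by
  induction hz using Submodule.span_induction with
  | mem x hx =>
    obtain ⟨U, hU, rfl⟩ := hx
    rw [← pabasis_inl h ⟨U, hU⟩, Module.Basis.repr_self]
    exact Finsupp.single_eq_of_ne (by simp)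
  | zero => simp
  | add a b _ _ ha hb => rw [map_add, Finsupp.add_apply, ha, hb, add_zero]
  | smul a x _ hx => rw [map_smul, Finsupp.smul_apply, hx, smul_zero]

lemma mem_spanV_of_repr_inr_zero (h : IsPolygonAlgebra n m 𝒢 R 𝒜 V W) {z : R}
    (hz : ∀ T : {S : Finset ℕ+ // Subgee 𝒢 S}, (pabasis h).repr z (Sum.inr T) = 0) :
    z ∈ Submodule.span ℚ {x : R | ∃ U : Finset ℕ+, Subgee 𝒢 U ∧ x = VSmon V U} := by
  set b := pabasis h with hb
  have hzz := b.linearCombination_repr z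
  rw [Finsupp.linearCombination_apply, Finsupp.sum] at hzz
  rw [← hzz]
  apply Submodule.sum_mem
  rintro (U | T) hj
  · apply Submodule.smul_mem
    rw [pabasis_inl]
    exact Submodule.subset_span ⟨U.1, U.2, rfl⟩
  · exact absurd (hz T) (Finsupp.mem_support_iff.mp hj)

end PA

namespace PA

variable {n m : ℕ} {𝒢 : Finset (Finset ℕ+)} {R : Type} [Ring R] [Algebra ℚ R]
  [FiniteDimensional ℚ R] {𝒜 : ℕ → Submodule ℚ R} [GradedAlgebra 𝒜]
  {V : ℕ+ → R} {W : Finset ℕ+ → R}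

lemma subgee_card_le_sup {S : Finset ℕ+} (hS : Subgee 𝒢 S) :
    S.card ≤ 𝒢.sup Finset.card := by
  obtain ⟨G, hG, T', hT', hrel⟩ := hS
  have h1 : S.card = Multiset.card T' := by
    simpa using Multiset.card_eq_card_of_rel hrel
  have h2 : Multiset.card T' ≤ G.card := by
    simpa using Multiset.card_le_card hT'
  exact le_trans (h1 ▸ h2) (Finset.le_sup hG)

lemma repr_key (h : IsPolygonAlgebra n m 𝒢 R 𝒜 V W) {i : ℕ+} (hi : (i : ℕ) ≤ n - 1)
    {S : Finset ℕ+} (hS : Subgee 𝒢 S) {T : Finset ℕ+} (hT : Subgee 𝒢 T)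
    (hcard : m - T.card = 1 + (m - S.card)) :
    (pabasis h).repr (V i * W S) (Sum.inr ⟨T, hT⟩) =
      if i ∈ S ∧ T = S.erase i then ((-1 : ℚ)) ^ (rho i (S.erase i)) else 0 := by
  classical
  have hm := h.hm
  have hSm : S.card ≤ m - 1 := subgee_card h.gee_card hS
  have hTm : T.card ≤ m - 1 := subgee_card h.gee_card hT
  have hTS : T.card + 1 = S.card := by omega
  have hTel : ∀ j ∈ T, (j : ℕ) ≤ n - 1 := fun j hj => subgee_mem h.gee_sub hT hj
  have hempty : Subgee 𝒢 (∅ : Finset ℕ+) := subgee_empty h.gee_nonempty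
  set j0 : {S : Finset ℕ+ // Subgee 𝒢 S} ⊕ {S : Finset ℕ+ // Subgee 𝒢 S} :=
    Sum.inr ⟨∅, hempty⟩ with hj0
  set L : R →ₗ[ℚ] ℚ :=
    ((pabasis h).coord j0).comp (LinearMap.mulLeft ℚ (VSmon V T)) with hL
  have hW0 : (pabasis h).repr (W ∅) j0 = 1 := by
    rw [repr_W h ⟨∅, hempty⟩, hj0, Finsupp.single_eq_same]
  have hLapp : ∀ y : R, L y = (pabasis h).repr (VSmon V T * y) j0 := fun y => by
    rw [hL, LinearMap.comp_apply, LinearMap.mulLeft_apply, Module.Basis.coord_apply]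
  set x := V i * W S with hx
  have hxd : x ∈ 𝒜 (1 + (m - S.card)) :=
    SetLike.mul_mem_graded (h.V_mem i hi) (h.W_mem S hS)
  have way2 : L x = (pabasis h).repr x (Sum.inr ⟨T, hT⟩) := by
    have hxsum := (pabasis h).linearCombination_repr x
    rw [Finsupp.linearCombination_apply, Finsupp.sum] at hxsum
    conv_lhs => rw [← hxsum]
    rw [map_sum]
    have hterm : ∀ j ∈ ((pabasis h).repr x).support,
        L (((pabasis h).repr x) j • pabasis h j)
          = if j = Sum.inr ⟨T, hT⟩ then ((pabasis h).repr x) j else 0 := by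
      rintro (⟨U, hU⟩ | ⟨T', hT'⟩) hjs
      · rw [map_smul, pabasis_inl]
        have hz : L (VSmon V U) = 0 := by
          rw [hLapp]
          exact repr_inr_zero_of_mem_spanV h
            (spanV_mul_VSmon h (VSmon_mem_spanV h hTel)
              (fun j hj => subgee_mem h.gee_sub hU hj)) _
        rw [hz, smul_zero, if_neg (by simp)]
      · have hne : ((pabasis h).repr x) (Sum.inr ⟨T', hT'⟩) ≠ 0 :=
          Finsupp.mem_support_iff.mp hjs
        have hdT' : m - T'.card = 1 + (m - S.card) := by
          by_contra hcon
          exact hne (repr_eq_zero_of_deg_ne h hxd _ (by simpa [pdeg] using hcon))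
        have hT'm : T'.card ≤ m - 1 := subgee_card h.gee_card hT'
        have hcc : T.card = T'.card := by omega
        rw [map_smul, pabasis_inr, hLapp, h.VW T T' hT hT' hcc]
        by_cases heq : T = T'
        · subst heq
          rw [if_pos rfl, hW0, if_pos rfl, smul_eq_mul, mul_one]
        · rw [if_neg heq, map_zero, if_neg (by
            simp only [Sum.inr.injEq, Subtype.mk.injEq]
            exact fun hh => heq hh.symm)]
          simp
    rw [Finset.sum_congr rfl hterm, Finset.sum_ite_eq' (((pabasis h).repr x).support)
      (Sum.inr (⟨T, hT⟩ : {S : Finset ℕ+ // Subgee 𝒢 S}))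
      (fun j => ((pabasis h).repr x) j)]
    by_cases hmem : Sum.inr (⟨T, hT⟩ : {S : Finset ℕ+ // Subgee 𝒢 S})
        ∈ ((pabasis h).repr x).support
    · rw [if_pos hmem]
    · rw [if_neg hmem]
      exact (Finsupp.notMem_support_iff.mp hmem).symm
  have way1 : L x = if i ∈ S ∧ T = S.erase i then ((-1 : ℚ)) ^ (rho i (S.erase i)) else 0 := by
    rw [hLapp, hx, ← mul_assoc]
    by_cases hiT : i ∈ T
    · rw [VSmon_mul_V_of_mem h hTel hi hiT, zero_mul, map_zero,
        if_neg (by rintro ⟨hiS, rfl⟩; exact (Finset.notMem_erase i S) hiT)]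
      simp
    · rw [VSmon_mul_V_of_not_mem h hTel hi hiT, smul_mul_assoc, map_smul, Finsupp.smul_apply]
      by_cases hins : Subgee 𝒢 (insert i T)
      · have hcins : (insert i T).card = S.card := by
          rw [Finset.card_insert_of_notMem hiT]; omega
        rw [h.VW _ S hins hS hcins]
        by_cases heq : insert i T = S
        · have hiS : i ∈ S := heq ▸ Finset.mem_insert_self i T
          have hTe : T = S.erase i := by rw [← heq, Finset.erase_insert hiT]
          rw [if_pos heq, hW0, if_pos ⟨hiS, hTe⟩, smul_eq_mul, mul_one, hTe]
        · rw [if_neg heq, map_zero,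
            if_neg (by rintro ⟨hiS, rfl⟩; exact heq (Finset.insert_erase hiS))]
          simp
      · have hz : VSmon V (insert i T) = 0 := by
          by_contra hne
          refine hins ((h.VS_ne _ ?_).mp hne)
          exact Finset.insert_subset (mem_bra.mpr hi) (subgee_sub_bra h.gee_sub hT)
        rw [hz, zero_mul, map_zero,
          if_neg (by rintro ⟨hiS, rfl⟩; rw [Finset.insert_erase hiS] at hins; exact hins hS)]
        simp
  rw [← way2, way1]

end PA

/-- Products `Vᵢ · W_S` in an algebra of type `(𝒢, m, n)`: modulo the span of the monomials
`V_U` (`U` a subgee), `Vᵢ W_S` is `(−1)^{ρᵢ(S∖{i})} W_{S∖{i}}` if `i ∈ S` and `0` if `i ∉ S`;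
and these are exact equalities when `m − |S| ≥ s`, where `s` is the maximal gee size. -/
theorem stmt_6 (n m : ℕ) (𝒢 : Finset (Finset ℕ+))
    (R : Type) [Ring R] [Algebra ℚ R] [FiniteDimensional ℚ R]
    (𝒜 : ℕ → Submodule ℚ R) [GradedAlgebra 𝒜] (V : ℕ+ → R) (W : Finset ℕ+ → R)
    (h : IsPolygonAlgebra n m 𝒢 R 𝒜 V W)
    (i : ℕ+) (hi : (i : ℕ) ≤ n - 1) (S : Finset ℕ+) (hS : Subgee 𝒢 S) :
    (i ∈ S → V i * W S - ((-1 : ℚ)) ^ (rho i (S.erase i)) • W (S.erase i) ∈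
      Submodule.span ℚ {x : R | ∃ U : Finset ℕ+, Subgee 𝒢 U ∧ x = VSmon V U}) ∧
    (i ∉ S → V i * W S ∈
      Submodule.span ℚ {x : R | ∃ U : Finset ℕ+, Subgee 𝒢 U ∧ x = VSmon V U}) ∧
    (𝒢.sup Finset.card ≤ m - S.card →
      (i ∈ S → V i * W S = ((-1 : ℚ)) ^ (rho i (S.erase i)) • W (S.erase i)) ∧
      (i ∉ S → V i * W S = 0)) := by
  
  classical
  have hm := h.hm
  have hSm : S.card ≤ m - 1 := PA.subgee_card h.gee_card hS
  have hse : Subgee 𝒢 (S.erase i) := PA.subgee_subset (Finset.erase_subset i S) hS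
  have hxd : V i * W S ∈ 𝒜 (1 + (m - S.card)) :=
    SetLike.mul_mem_graded (h.V_mem i hi) (h.W_mem S hS)
  have hinr : ∀ (T : Finset ℕ+) (hT : Subgee 𝒢 T),
      (PA.pabasis h).repr (V i * W S) (Sum.inr ⟨T, hT⟩) =
        if i ∈ S ∧ T = S.erase i then ((-1 : ℚ)) ^ (rho i (S.erase i)) else 0 := by
    intro T hT
    by_cases hc : m - T.card = 1 + (m - S.card)
    · exact PA.repr_key h hi hS hT hc
    · rw [PA.repr_eq_zero_of_deg_ne h hxd _ (by simpa [PA.pdeg] using hc), if_neg]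
      rintro ⟨hiS, rfl⟩
      apply hc
      have h1 : 1 ≤ S.card := Finset.card_pos.mpr ⟨i, hiS⟩
      rw [Finset.card_erase_of_mem hiS]
      omega
  have hrW : ∀ (T : Finset ℕ+) (hT : Subgee 𝒢 T),
      (PA.pabasis h).repr (W (S.erase i)) (Sum.inr ⟨T, hT⟩) =
        if T = S.erase i then (1 : ℚ) else 0 := by
    intro T hT
    rw [PA.repr_W h ⟨S.erase i, hse⟩, Finsupp.single_apply]
    simp only [Sum.inr.injEq, Subtype.mk.injEq]
    by_cases hTe : T = S.erase i
    · rw [if_pos hTe.symm, if_pos hTe]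
    · rw [if_neg (fun hh => hTe hh.symm), if_neg hTe]
  refine ⟨?_, ?_, ?_⟩
  · intro hiS
    apply PA.mem_spanV_of_repr_inr_zero h
    rintro ⟨T, hT⟩
    rw [map_sub, Finsupp.sub_apply, map_smul, Finsupp.smul_apply, hinr T hT, hrW T hT]
    by_cases hTe : T = S.erase i
    · rw [if_pos ⟨hiS, hTe⟩, if_pos hTe, smul_eq_mul, mul_one, sub_self]
    · rw [if_neg (fun hc => hTe hc.2), if_neg hTe, smul_zero, sub_zero]
  · intro hiS
    apply PA.mem_spanV_of_repr_inr_zero h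
    rintro ⟨T, hT⟩
    rw [hinr T hT, if_neg (fun hc => hiS hc.1)]
  · intro hsup
    have hinl : ∀ (U : Finset ℕ+) (hU : Subgee 𝒢 U),
        (PA.pabasis h).repr (V i * W S) (Sum.inl ⟨U, hU⟩) = 0 := by
      intro U hU
      apply PA.repr_eq_zero_of_deg_ne h hxd
      have := PA.subgee_card_le_sup hU
      simp only [PA.pdeg, Sum.elim_inl]
      omega
    constructor
    · intro hiS
      apply (PA.pabasis h).ext_elem
      rintro (⟨U, hU⟩ | ⟨T, hT⟩)
      · rw [hinl U hU, map_smul, Finsupp.smul_apply, PA.repr_W h ⟨S.erase i, hse⟩,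
          Finsupp.single_eq_of_ne (by simp), smul_zero]
      · rw [hinr T hT, map_smul, Finsupp.smul_apply, hrW T hT]
        by_cases hTe : T = S.erase i
        · rw [if_pos ⟨hiS, hTe⟩, if_pos hTe, smul_eq_mul, mul_one]
        · rw [if_neg (fun hc => hTe hc.2), if_neg hTe, smul_zero]
    · intro hiS
      have hz : (PA.pabasis h).repr (V i * W S) = 0 := by
        ext j
        rcases j with ⟨U, hU⟩ | ⟨T, hT⟩
        · rw [hinl U hU]; simp
        · rw [hinr T hT, if_neg (fun hc => hiS hc.1)]; simp
      exact (PA.pabasis h).repr.map_eq_zero_iff.mp hz
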